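/- In a monoidal setting for dynamic stability with compatible unit clock, for every object X, the map ⊕ × id_X : T × T × X → T × X is a morphism of F-coalgebras from L_{T×X} to L_X, where L_Y := ψ_{T,Y} ∘ (1_T × 0_Y); consequently the derivative of the flow ⊕ × id_X equals L_X. -/

import Mathlib

open CategoryTheory CategoryTheory.Limits

universe v u

/-- The data of a monoidal setting for dynamic stability, without the monoid
structure on the time object: an endofunctor `F` with a laxator `ψ` (axiom D5),
stationary systems `0` (axiom D6), a time object `T` with a distinguished point
`e = 0_⊕` and a unit-clock coalgebra `1_T : T ⟶ F T`. -/
structure PreSetting (C : Type u) [Category.{v} C] [HasFiniteProducts C] where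
  /-- the endofunctor -/
  F : C ⥤ C
  /-- the laxator (axiom D5) -/
  ψ : ∀ A B : C, F.obj A ⨯ F.obj B ⟶ F.obj (A ⨯ B)
  ψ_nat : ∀ {A A' B B' : C} (u : A ⟶ A') (w : B ⟶ B'),
    prod.map (F.map u) (F.map w) ≫ ψ A' B' = ψ A B ≫ F.map (prod.map u w)
  ψ_assoc : ∀ A B D : C,
    prod.map (ψ A B) (𝟙 (F.obj D)) ≫ ψ (A ⨯ B) D ≫
        F.map (prod.associator A B D).hom =
      (prod.associator (F.obj A) (F.obj B) (F.obj D)).hom ≫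
        prod.map (𝟙 (F.obj A)) (ψ B D) ≫ ψ A (B ⨯ D)
  /-- stationary systems (axiom D6) -/
  z : ∀ A : C, A ⟶ F.obj A
  z_nat : ∀ {A B : C} (u : A ⟶ B), z A ≫ F.map u = u ≫ z B
  z_mul : ∀ A B : C, prod.map (z A) (z B) ≫ ψ A B = z (A ⨯ B)
  /-- the time object -/
  T : C
  /-- the point `0_⊕` of the time object -/
  e : ⊤_ C ⟶ T
  /-- the unit clock coalgebra -/
  oneT : T ⟶ F.obj T

namespace PreSetting

variable {C : Type u} [Category.{v} C] [HasFiniteProducts C] (S : PreSetting C)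

/-- The coalgebra `L_X := ψ_{T,X} ∘ (1_T × 0_X) : T ⨯ X ⟶ F (T ⨯ X)`. -/
noncomputable def L (X : C) : S.T ⨯ X ⟶ S.F.obj (S.T ⨯ X) :=
  prod.map S.oneT (S.z X) ≫ S.ψ S.T X

/-- The initial-condition inclusion `0_⊕ × id_X : X ⟶ T ⨯ X`. -/
noncomputable def ins (X : C) : X ⟶ S.T ⨯ X :=
  prod.lift (terminal.from X ≫ S.e) (𝟙 X)

/-- `p` is a morphism of `F`-coalgebras from `(A, f)` to `(B, g)`. -/
def IsCoalgHom {A B : C} (f : A ⟶ S.F.obj A) (g : B ⟶ S.F.obj B)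
    (p : A ⟶ B) : Prop :=
  f ≫ S.F.map p = p ≫ g

/-- The derivative of a flow `φ : T ⨯ E ⟶ E`:
`Dφ := Fφ ∘ L_E ∘ (0_⊕ × id_E)`. -/
noncomputable def deriv {E : C} (φ : S.T ⨯ E ⟶ E) : E ⟶ S.F.obj E :=
  S.ins E ≫ S.L E ≫ S.F.map φ

/-- `T`-completeness of a coalgebra `(A, f)`: every `g : B ⟶ A` extends to a
unique coalgebra morphism `γ : L_B ⟶ f` with initial condition `g`. -/
def TComplete {A : C} (f : A ⟶ S.F.obj A) : Prop :=
  ∀ {B : C} (g : B ⟶ A), ∃! γ : S.T ⨯ B ⟶ A,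
    S.IsCoalgHom (S.L B) f γ ∧ S.ins B ≫ γ = g

end PreSetting

/-- A monoidal setting for dynamic stability: a `PreSetting` together with a
monoid structure `(T, ⊕, 0_⊕)` on the time object. -/
structure DynSetting (C : Type u) [Category.{v} C] [HasFiniteProducts C]
    extends PreSetting C where
  /-- the monoid operation `⊕` on the time object -/
  mul : T ⨯ T ⟶ T
  mul_one : prod.lift (𝟙 T) (terminal.from T ≫ e) ≫ mul = 𝟙 T
  one_mul : prod.lift (terminal.from T ≫ e) (𝟙 T) ≫ mul = 𝟙 T
  mul_assoc : (prod.associator T T T).inv ≫ prod.map mul (𝟙 T) ≫ mul =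
    prod.map (𝟙 T) mul ≫ mul

namespace DynSetting

variable {C : Type u} [Category.{v} C] [HasFiniteProducts C] (S : DynSetting C)

/-- `φ : T ⨯ E ⟶ E` is a `T`-flow (monoid action). -/
def IsFlow {E : C} (φ : S.T ⨯ E ⟶ E) : Prop :=
  S.ins E ≫ φ = 𝟙 E ∧
    prod.map (𝟙 S.T) φ ≫ φ =
      (prod.associator S.T S.T E).inv ≫ prod.map S.mul (𝟙 E) ≫ φ

/-- Compatibility of the unit clock with the monoid structure:
`F(⊕) ∘ L_T = 1_T ∘ ⊕`. -/
def ClockCompat : Prop :=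
  S.L S.T ≫ S.F.map S.mul = S.mul ≫ S.oneT

end DynSetting

/-- **The monoid operation is a coalgebra morphism `L_{T×X} ⟶ L_X`.** In a
monoidal setting for dynamic stability whose unit clock is compatible with the
monoid structure (`F(⊕) ∘ L_T = 1_T ∘ ⊕`), for every object `X` the map
`⊕ × id_X : T ⨯ (T ⨯ X) ⟶ T ⨯ X` (up to the associator) is a morphism of
`F`-coalgebras `L_{T ⨯ X} ⟶ L_X`; consequently its derivative as a flow on
`T ⨯ X` is `L_X`. -/
theorem mul_id_coalgHom_and_deriv {C : Type u} [Category.{v} C]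
    [HasFiniteProducts C] (S : DynSetting C) (hcc : S.ClockCompat) (X : C) :
    S.toPreSetting.IsCoalgHom (S.L (S.T ⨯ X)) (S.L X)
        ((prod.associator S.T S.T X).inv ≫ prod.map S.mul (𝟙 X)) ∧
      S.toPreSetting.deriv
          ((prod.associator S.T S.T X).inv ≫ prod.map S.mul (𝟙 X)) = S.L X := by
  set T := S.T with hT
  -- reversed associativity of ψ
  have ψ_assoc' : prod.map (𝟙 (S.F.obj T)) (S.ψ T X) ≫ S.ψ T (T ⨯ X) ≫
      S.F.map (prod.associator T T X).inv =
      (prod.associator (S.F.obj T) (S.F.obj T) (S.F.obj X)).inv ≫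
        prod.map (S.ψ T T) (𝟙 (S.F.obj X)) ≫ S.ψ (T ⨯ T) X := by
    have h := S.ψ_assoc T T X
    rw [← Iso.inv_comp_eq] at h
    rw [← Category.assoc, ← h]
    simp only [Category.assoc, ← S.F.map_comp, Iso.hom_inv_id, S.F.map_id,
      Category.comp_id]
  have assoc_inv_nat : ∀ {X₁ X₂ X₃ Y₁ Y₂ Y₃ : C} (f₁ : X₁ ⟶ Y₁) (f₂ : X₂ ⟶ Y₂)
      (f₃ : X₃ ⟶ Y₃),
      prod.map f₁ (prod.map f₂ f₃) ≫ (prod.associator Y₁ Y₂ Y₃).inv =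
        (prod.associator X₁ X₂ X₃).inv ≫ prod.map (prod.map f₁ f₂) f₃ := by
    intro X₁ X₂ X₃ Y₁ Y₂ Y₃ f₁ f₂ f₃
    have h := prod.associator_naturality f₁ f₂ f₃
    rw [← Iso.eq_comp_inv] at h
    rw [h]
    simp only [Category.assoc, Iso.inv_hom_id_assoc]
  have key : S.toPreSetting.IsCoalgHom (S.L (T ⨯ X)) (S.L X)
      ((prod.associator T T X).inv ≫ prod.map S.mul (𝟙 X)) := by
    unfold PreSetting.IsCoalgHom PreSetting.L
    rw [S.F.map_comp]
    rw [← S.z_mul T X]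
    rw [show prod.map S.oneT (prod.map (S.z T) (S.z X) ≫ S.ψ T X) =
      prod.map S.oneT (prod.map (S.z T) (S.z X)) ≫
        prod.map (𝟙 (S.F.obj T)) (S.ψ T X) by simp [T]]
    simp only [Category.assoc]
    rw [reassoc_of% ψ_assoc']
    rw [reassoc_of% (assoc_inv_nat S.oneT (S.z T) (S.z X))]
    rw [← S.ψ_nat S.mul (𝟙 X)]
    simp only [prod.map_map_assoc, Category.assoc]
    rw [show prod.map S.oneT (S.z T) ≫ S.ψ T T ≫ S.F.map S.mul =
      S.mul ≫ S.oneT from by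
        have h := hcc
        unfold DynSetting.ClockCompat PreSetting.L at h
        simpa [Category.assoc] using h]
    simp [T]
  refine ⟨key, ?_⟩
  unfold PreSetting.deriv
  rw [key]
  have hins : S.ins (T ⨯ X) ≫ (prod.associator T T X).inv ≫
      prod.map S.mul (𝟙 X) = 𝟙 (T ⨯ X) := by
    have h1 : prod.lift (terminal.from (T ⨯ X) ≫ S.e) (prod.fst : T ⨯ X ⟶ T) =
        (prod.fst : T ⨯ X ⟶ T) ≫ prod.lift (terminal.from T ≫ S.e) (𝟙 T) := by
      apply Limits.prod.hom_ext <;> simp [← Category.assoc, terminal.comp_from]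
    apply Limits.prod.hom_ext
    · simp only [Category.assoc, prod.map_fst, PreSetting.ins,
        prod.associator_inv, prod.lift_fst_assoc, prod.lift_snd,
        prod.lift_fst, Category.id_comp, prod.lift_map, Category.comp_id]
      rw [prod.comp_lift_assoc]
      simp only [T, prod.lift_fst, prod.lift_snd_assoc, Category.id_comp]
      rw [h1, Category.assoc, S.one_mul, Category.comp_id]
    · simp [T, PreSetting.ins, prod.associator_inv]; erw [prod.lift_snd, prod.lift_snd_assoc, Category.id_comp]
  rw [← Category.assoc, hins, Category.id_comp]
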